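/- arXiv:cs/0501017 — 2 statements merged into one kernel-verified Lean document; each statement's English description precedes it below -/
import Mathlib

section
/- Let R be an additively commutative semiring with 0 and 1, and let ∼ be a congruence relation on Mat_n(R). Then there exists a congruence relation ∼₀ on R such that for all A, B ∈ Mat_n(R): A ∼ B if and only if a_{ij} ∼₀ b_{ij} for all 1 ≤ i, j ≤ n. -/
/-- A congruence relation on a semiring-like structure with addition and multiplication. -/
def IsSemiringCongruence {R : Type*} [Add R] [Mul R] (r : R → R → Prop) : Prop :=
  Equivalence r ∧
    (∀ a b c, r a b → r (a * c) (b * c)) ∧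
    (∀ a b c, r a b → r (c * a) (c * b)) ∧
    (∀ a b c, r a b → r (a + c) (b + c)) ∧
    (∀ a b c, r a b → r (c + a) (c + b))

theorem aux_sum_congr {M : Type*} [AddCommMonoid M] [Mul M] {r : M → M → Prop}
    (hr : IsSemiringCongruence r) {ι : Type*} (s : Finset ι) (f g : ι → M)
    (h : ∀ i ∈ s, r (f i) (g i)) : r (∑ i ∈ s, f i) (∑ i ∈ s, g i) := by
  obtain ⟨heq, _, _, har, hal⟩ := hr
  classical
  induction s using Finset.induction_on with
  | empty => simpa using heq.refl 0
  | insert _ _ hx ih =>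
    rename_i a s
    rw [Finset.sum_insert hx, Finset.sum_insert hx]
    exact heq.trans (har _ _ _ (h a (Finset.mem_insert_self a s)))
      (hal _ _ _ (ih fun i hi => h i (Finset.mem_insert_of_mem hi)))

theorem matrix_congruence_is_entrywise {R : Type*} [Semiring R] {n : ℕ}
    (rM : Matrix (Fin n) (Fin n) R → Matrix (Fin n) (Fin n) R → Prop)
    (hrM : IsSemiringCongruence rM) :
    ∃ r₀ : R → R → Prop, IsSemiringCongruence r₀ ∧
      ∀ A B : Matrix (Fin n) (Fin n) R, rM A B ↔ ∀ i j, r₀ (A i j) (B i j) := by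
  have hrM' := hrM
  obtain ⟨heq, hmr, hml, har, hal⟩ := hrM'
  rcases Nat.eq_zero_or_pos n with hn | hn
  · subst hn
    refine ⟨fun _ _ => True,
      ⟨⟨fun _ => trivial, fun _ => trivial, fun _ _ => trivial⟩,
       fun _ _ _ _ => trivial, fun _ _ _ _ => trivial,
       fun _ _ _ _ => trivial, fun _ _ _ _ => trivial⟩, ?_⟩
    intro A B
    constructor
    · intro _ i j; trivial
    · intro _
      have : A = B := Subsingleton.elim A B
      rw [this]; exact heq.refl B
  · set z : Fin n := ⟨0, hn⟩ with hz
    refine ⟨fun a b => rM (Matrix.single z z a) (Matrix.single z z b), ?_, ?_⟩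
    · refine ⟨⟨fun a => heq.refl _, fun h => heq.symm h, fun h h' => heq.trans h h'⟩,
        ?_, ?_, ?_, ?_⟩
      · intro a b c h
        have := hmr _ _ (Matrix.single z z c) h
        simpa using this
      · intro a b c h
        have := hml _ _ (Matrix.single z z c) h
        simpa using this
      · intro a b c h
        have := har _ _ (Matrix.single z z c) h
        simpa [← Matrix.single_add] using this
      · intro a b c h
        have := hal _ _ (Matrix.single z z c) h
        simpa [← Matrix.single_add] using this
    · intro A B
      have key : ∀ (C : Matrix (Fin n) (Fin n) R) (i j : Fin n),
          Matrix.single z (i : Fin n) (1 : R) * C * Matrix.single j z 1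
            = Matrix.single z z (C i j) := by
        intro C i j
        ext a b
        by_cases ha : a = z <;> by_cases hb : b = z <;>
          simp [ha, hb, Matrix.single, Matrix.mul_apply, Finset.sum_ite_eq,
            eq_comm, Ne.symm]
      constructor
      · intro h i j
        have := hmr _ _ (Matrix.single j z 1) (hml _ _ (Matrix.single z i 1) h)
        rwa [key A i j, key B i j] at this
      · intro h
        have hA := Matrix.matrix_eq_sum_single A
        have hB := Matrix.matrix_eq_sum_single B
        rw [hA, hB]
        refine aux_sum_congr hrM _ _ _ (fun i _ => ?_)
        refine aux_sum_congr hrM _ _ _ (fun j _ => ?_)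
        have : ∀ (c : R), Matrix.single i j c =
            Matrix.single i z (1 : R) * Matrix.single z z c *
              Matrix.single z j 1 := by
          intro c; simp
        rw [this (A i j), this (B i j)]
        exact hmr _ _ _ (hml _ _ _ (h i j))
end

section
/- Let R be an additively commutative semiring with 0 and 1 and let n ≥ 1. Then R is congruence-simple if and only if Mat_n(R) is congruence-simple. -/
/-- A semiring is congruence-simple if its only congruences are the full and trivial ones. -/
def IsCongruenceSimple (R : Type*) [Add R] [Mul R] : Prop :=
  ∀ r : R → R → Prop, IsSemiringCongruence r →
    (∀ a b, r a b) ∨ (∀ a b, r a b ↔ a = b)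

lemma congr_add_add {S : Type*} [Add S] [Mul S] {s : S → S → Prop}
    (hs : IsSemiringCongruence s) {a b c d : S} (h1 : s a b) (h2 : s c d) :
    s (a + c) (b + d) :=
  hs.1.trans (hs.2.2.2.1 _ _ c h1) (hs.2.2.2.2 _ _ b h2)

lemma congr_sum {S : Type*} [AddCommMonoid S] [Mul S] {s : S → S → Prop}
    (hs : IsSemiringCongruence s) {ι : Type*} (t : Finset ι) (f g : ι → S)
    (h : ∀ i ∈ t, s (f i) (g i)) : s (∑ i ∈ t, f i) (∑ i ∈ t, g i) := by
  classical
  induction t using Finset.induction with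
  | empty => simpa using hs.1.refl 0
  | insert _ _ hnot ih =>
    rw [Finset.sum_insert hnot, Finset.sum_insert hnot]
    exact congr_add_add hs (h _ (Finset.mem_insert_self _ _))
      (ih fun i hi => h i (Finset.mem_insert_of_mem hi))

theorem simple_iff_matrix_simple {R : Type*} [Semiring R] {n : ℕ} (hn : 1 ≤ n) :
    IsCongruenceSimple R ↔ IsCongruenceSimple (Matrix (Fin n) (Fin n) R) := by
  classical
  set i0 : Fin n := ⟨0, hn⟩ with hi0
  constructor
  · intro hR s hs
    -- induced congruence on R
    set r : R → R → Prop := fun a b =>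
      s (Matrix.single i0 i0 a) (Matrix.single i0 i0 b) with hr
    have hrcong : IsSemiringCongruence r := by
      refine ⟨⟨fun a => hs.1.refl _, fun h => hs.1.symm h, fun h h' => hs.1.trans h h'⟩,
        ?_, ?_, ?_, ?_⟩
      · intro a b c h
        have := hs.2.1 _ _ (Matrix.single i0 i0 c) h
        simpa [r, Matrix.single_mul_single_same] using this
      · intro a b c h
        have := hs.2.2.1 _ _ (Matrix.single i0 i0 c) h
        simpa [r, Matrix.single_mul_single_same] using this
      · intro a b c h
        have := hs.2.2.2.1 _ _ (Matrix.single i0 i0 c) h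
        simpa [r, Matrix.single_add] using this
      · intro a b c h
        have := hs.2.2.2.2 _ _ (Matrix.single i0 i0 c) h
        simpa [r, Matrix.single_add] using this
    -- key: s A B ↔ all entries r-related
    have extract : ∀ A B : Matrix (Fin n) (Fin n) R, s A B → ∀ i j, r (A i j) (B i j) := by
      intro A B h i j
      have h1 := hs.2.2.1 _ _ (Matrix.single i0 i (1 : R)) h
      have h2 := hs.2.1 _ _ (Matrix.single j i0 (1 : R)) h1
      have e : ∀ C : Matrix (Fin n) (Fin n) R,
          Matrix.single i0 i (1 : R) * C * Matrix.single j i0 (1 : R)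
            = Matrix.single i0 i0 (C i j) := by
        intro C
        ext a b
        by_cases ha : a = i0 <;> by_cases hb : b = i0 <;>
          simp [Matrix.single, ha, hb, Matrix.mul_apply, Finset.sum_ite_eq,
            Finset.sum_ite_eq', ite_and] <;> split_ifs <;> simp_all
      rw [e A, e B] at h2
      exact h2
    have embed : ∀ (i j : Fin n) (a b : R), r a b →
        s (Matrix.single i j a) (Matrix.single i j b) := by
      intro i j a b h
      have h1 := hs.2.2.1 _ _ (Matrix.single i i0 (1 : R)) h
      have h2 := hs.2.1 _ _ (Matrix.single i0 j (1 : R)) h1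
      simpa [Matrix.single_mul_single_same, mul_assoc] using h2
    rcases hR r hrcong with hfull | htriv
    · left
      intro A B
      have : ∀ i j : Fin n, s (Matrix.single i j (A i j))
          (Matrix.single i j (B i j)) := fun i j => embed i j _ _ (hfull _ _)
      have hsum : s (∑ i : Fin n, ∑ j : Fin n, Matrix.single i j (A i j))
          (∑ i : Fin n, ∑ j : Fin n, Matrix.single i j (B i j)) := by
        refine congr_sum hs _ _ _ fun i _ => congr_sum hs _ _ _ fun j _ => this i j
      rwa [← Matrix.matrix_eq_sum_single, ← Matrix.matrix_eq_sum_single] at hsum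
    · right
      intro A B
      constructor
      · intro h
        ext i j
        exact (htriv _ _).mp (extract A B h i j)
      · rintro rfl; exact hs.1.refl _
  · intro hM r hr
    set s : Matrix (Fin n) (Fin n) R → Matrix (Fin n) (Fin n) R → Prop :=
      fun A B => ∀ i j, r (A i j) (B i j) with hsdef
    have hrADD : ∀ {a b c d : R}, r a b → r c d → r (a + c) (b + d) := fun h1 h2 =>
      hr.1.trans (hr.2.2.2.1 _ _ _ h1) (hr.2.2.2.2 _ _ _ h2)
    have hrsum : ∀ (t : Finset (Fin n)) (f g : Fin n → R),
        (∀ i ∈ t, r (f i) (g i)) → r (∑ i ∈ t, f i) (∑ i ∈ t, g i) := by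
      intro t f g h
      induction t using Finset.induction with
      | empty => simpa using hr.1.refl 0
      | insert _ _ hnot ih =>
        rw [Finset.sum_insert hnot, Finset.sum_insert hnot]
        exact hrADD (h _ (Finset.mem_insert_self _ _))
          (ih fun i hi => h i (Finset.mem_insert_of_mem hi))
    have hscong : IsSemiringCongruence s := by
      refine ⟨⟨fun A i j => hr.1.refl _, fun h i j => hr.1.symm (h i j),
        fun h h' i j => hr.1.trans (h i j) (h' i j)⟩, ?_, ?_, ?_, ?_⟩
      · intro A B C h i j
        simp only [Matrix.mul_apply]
        exact hrsum _ _ _ fun k _ => hr.2.1 _ _ _ (h i k)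
      · intro A B C h i j
        simp only [Matrix.mul_apply]
        exact hrsum _ _ _ fun k _ => hr.2.2.1 _ _ _ (h k j)
      · intro A B C h i j
        exact hr.2.2.2.1 _ _ _ (h i j)
      · intro A B C h i j
        exact hr.2.2.2.2 _ _ _ (h i j)
    rcases hM s hscong with hfull | htriv
    · left
      intro a b
      have := hfull (fun _ _ => a) (fun _ _ => b) i0 i0
      exact this
    · right
      intro a b
      constructor
      · intro h
        have : ((fun _ _ => a : Matrix (Fin n) (Fin n) R)) = fun _ _ => b :=
          (htriv _ _).mp (fun _ _ => h)
        exact congrFun (congrFun this i0) i0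
      · rintro rfl; exact hr.1.refl _
end
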